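/- For every z ∈ ℂ, the characteristic polynomial of L̃ satisfies det(z·1 − L̃) = ∏_{j=1}^{n} (z^m − λ_j^m). -/

import Mathlib

open Matrix BigOperators

lemma cyc_det (m : ℕ) [NeZero m] (c z : ℂ) :
    (z • (1 : Matrix (ZMod m) (ZMod m) ℂ) -
      Matrix.of fun h i => if i = h + 1 then c else 0).det = z ^ m - c ^ m := by
  set M : Matrix (ZMod m) (ZMod m) ℂ :=
    z • (1 : Matrix (ZMod m) (ZMod m) ℂ) - Matrix.of fun h i => if i = h + 1 then c else 0 with hMdef
  rcases eq_or_lt_of_le (Nat.one_le_iff_ne_zero.mpr (NeZero.ne m)) with hm | hm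
  · -- m = 1
    subst hm
    rw [Matrix.det_unique]
    have : (default : ZMod 1) = default + 1 := Subsingleton.elim _ _
    simp [hMdef, ← this, Matrix.one_apply, pow_one]
    exact fun h => absurd (Subsingleton.elim _ _) h
  · haveI : Fact (1 < m) := ⟨hm⟩
    have hone : (1 : ZMod m) ≠ 0 := one_ne_zero
    set e : Equiv.Perm (ZMod m) := Equiv.addRight (-1 : ZMod m) with he
    have hea : ∀ a : ZMod m, e a = a - 1 := fun a => by
      simp [he, sub_eq_add_neg]
    have hMentry : ∀ h i : ZMod m,
        M h i = (if h = i then z else 0) - (if i = h + 1 then c else 0) := by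
      intro h i
      simp [hMdef, Matrix.one_apply, mul_ite]
    -- key classification
    have hclass : ∀ σ : Equiv.Perm (ZMod m), (∀ i, σ i = i ∨ σ i = i - 1) → σ ≠ 1 → σ = e := by
      intro σ hσ hne
      have : ∃ i₀, σ i₀ ≠ i₀ := by
        by_contra h
        push_neg at h
        exact hne (Equiv.ext h)
      obtain ⟨i₀, hi₀⟩ := this
      have h0 : σ i₀ = i₀ - 1 := (hσ i₀).resolve_left hi₀
      have key : ∀ k : ℕ, σ (i₀ - k) = i₀ - k - 1 := by
        intro k
        induction k with
        | zero => simpa using h0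
        | succ k ih =>
          have hcast : ((k + 1 : ℕ) : ZMod m) = (k : ZMod m) + 1 := by push_cast; ring
          rw [hcast]
          have hj := hσ (i₀ - k - 1)
          rcases hj with hj | hj
          · exfalso
            have : σ (i₀ - k - 1) = σ (i₀ - k) := by rw [hj, ih]
            have h2 : i₀ - (k : ZMod m) - 1 = i₀ - k := σ.injective this
            have : (1 : ZMod m) = 0 := by linear_combination (i₀ - (k : ZMod m)) - (i₀ - (k:ZMod m) - 1) - h2
            exact hone this
          · calc σ (i₀ - ((k : ZMod m) + 1)) = σ (i₀ - k - 1) := by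
                  congr 1; ring
            _ = i₀ - k - 1 - 1 := hj
            _ = i₀ - ((k : ZMod m) + 1) - 1 := by ring
      ext a
      obtain ⟨k, hk⟩ := ZMod.natCast_zmod_surjective (n := m) (i₀ - a)
      have ha : a = i₀ - k := by rw [hk]; ring
      rw [ha, key k, hea]
  -- vanishing off {1, e}
    have hvan : ∀ σ : Equiv.Perm (ZMod m), σ ∉ ({1, e} : Finset (Equiv.Perm (ZMod m))) →
        Equiv.Perm.sign σ • ∏ i, M (σ i) i = 0 := by
      intro σ hσ
      simp only [Finset.mem_insert, Finset.mem_singleton] at hσ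
      push_neg at hσ
      have : ∃ i, σ i ≠ i ∧ σ i ≠ i - 1 := by
        by_contra h
        push_neg at h
        have : ∀ i, σ i = i ∨ σ i = i - 1 := by
          intro i
          by_cases h1 : σ i = i
          · exact Or.inl h1
          · exact Or.inr (h i h1)
        exact hσ.2 (hclass σ this hσ.1)
      obtain ⟨i, hi1, hi2⟩ := this
      have : M (σ i) i = 0 := by
        rw [hMentry]
        have c1 : ¬ σ i = i := hi1
        have c2 : ¬ i = σ i + 1 := by
          intro h; exact hi2 (by linear_combination -h)
        simp [c1, c2]
      have hz : ∏ i : ZMod m, M (σ i) i = 0 := Finset.prod_eq_zero (Finset.mem_univ i) this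
      rw [hz, smul_zero]
    have h1e : (1 : Equiv.Perm (ZMod m)) ≠ e := by
      intro h
      have := congrArg (fun σ : Equiv.Perm (ZMod m) => σ 0) h
      simp [hea] at this
    rw [Matrix.det_apply]
    rw [← Finset.sum_subset (Finset.subset_univ ({1, e} : Finset (Equiv.Perm (ZMod m))))
      (fun σ _ hσ => hvan σ hσ)]
    rw [Finset.sum_pair h1e]
    have hcard : Fintype.card (ZMod m) = m := ZMod.card m
    have hterm1 : Equiv.Perm.sign (1 : Equiv.Perm (ZMod m)) • ∏ i, M ((1 : Equiv.Perm (ZMod m)) i) i = z ^ m := by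
      have : ∀ i : ZMod m, M i i = z := by
        intro i
        rw [hMentry]
        have : ¬ i = i + 1 := by
          intro h
          exact hone (by linear_combination -h)
        simp [this]
      simp [this, Finset.prod_const, hcard]
    have hsupp : e.support = Finset.univ := by
      ext x
      simp [Equiv.Perm.mem_support, hea]
    have hcyc : e.IsCycle := by
      refine ⟨0, ?_, ?_⟩
      · rw [hea]
        intro h
        exact hone (by linear_combination -h)
      · intro y _
        obtain ⟨k, hk⟩ := ZMod.natCast_zmod_surjective (n := m) y
        refine ⟨-(k : ℤ), ?_⟩
        have : e ^ (-(k:ℤ)) = Equiv.addRight ((-(k:ℤ)) • (-1 : ZMod m)) := by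
          rw [he, Equiv.zsmul_addRight]
        rw [this]
        simp only [Equiv.coe_addRight, zero_add]
        rw [zsmul_eq_mul]
        push_cast
        linear_combination hk
    have hsign : Equiv.Perm.sign e = -(-1) ^ m := by
      rw [hcyc.sign, hsupp]
      congr 1
      rw [Finset.card_univ, hcard]
    have hterm2 : Equiv.Perm.sign e • ∏ i, M (e i) i = -(c ^ m) := by
      have hent : ∀ i : ZMod m, M (e i) i = -c := by
        intro i
        rw [hMentry, hea]
        have c1 : ¬ i - 1 = i := by
          intro h
          exact hone (by linear_combination i - (i-1) - h)
        have c2 : i = i - 1 + 1 := by ring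
        simp [c1, ← c2]
      rw [Finset.prod_congr rfl (fun i _ => hent i), Finset.prod_const, Finset.card_univ, hcard,
        hsign, Units.smul_def, zsmul_eq_mul]
      push_cast
      rw [neg_pow c]
      have h11 : ((-1:ℂ))^m * (-1:ℂ)^m = 1 := by rw [← mul_pow]; norm_num
      linear_combination (-(c^m)) * h11
    rw [hterm1, hterm2]
    ring

noncomputable section

/-- The block matrix `L̃` with diagonal blocks `Λ = diag(λ₁,…,λₙ)` at positions `(h, h+1)`:
its entry in row `(h,j)` and column `(i,k)` is `λⱼ` if `k = j` and `i = h + 1` in `ℤ/mℤ`,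
and `0` otherwise. -/
def Ltilde (m n : ℕ) (lam : Fin n → ℂ) :
    Matrix (ZMod m × Fin n) (ZMod m × Fin n) ℂ :=
  Matrix.of fun p q => if q.2 = p.2 ∧ q.1 = p.1 + 1 then lam p.2 else 0

/-- The characteristic polynomial of `L̃` satisfies
`det(z·1 − L̃) = ∏_{j=1}^{n} (z^m − λⱼ^m)`. -/
theorem charpoly_Ltilde (m n : ℕ) [NeZero m] (hn : 0 < n) (lam : Fin n → ℂ) (z : ℂ) :
    (z • (1 : Matrix (ZMod m × Fin n) (ZMod m × Fin n) ℂ) - Ltilde m n lam).det =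
      ∏ j : Fin n, (z ^ m - lam j ^ m) := by

  have hM : z • (1 : Matrix (ZMod m × Fin n) (ZMod m × Fin n) ℂ) - Ltilde m n lam =
      Matrix.blockDiagonal (fun j : Fin n =>
        z • (1 : Matrix (ZMod m) (ZMod m) ℂ) -
          Matrix.of fun h i => if i = h + 1 then lam j else 0) := by
    ext ⟨h, j⟩ ⟨i, k⟩
    by_cases hjk : j = k
    · subst hjk
      simp [Ltilde, Matrix.blockDiagonal_apply, Matrix.one_apply, Prod.ext_iff, mul_ite]
    · simp [Ltilde, Matrix.blockDiagonal_apply, Matrix.one_apply, Prod.ext_iff, hjk,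
        Ne.symm hjk, fun (h : k = j) => hjk h.symm]
  rw [hM, Matrix.det_blockDiagonal]
  exact Finset.prod_congr rfl fun j _ => cyc_det m (lam j) z
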